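/- The constant H_m := (2m/β*)² · ω_{2m−1} · Σ_{j=1}^{m−1} (−1)^{j+m} K_{m,j/2} K_{m,(2m−j−1)/2} satisfies H_m = (m/β*) · Σ_{j=1}^{m−1} (−1)^{⌊2j/m⌋} / j. -/

import Mathlib

open Real
noncomputable section

/-- The Adams critical exponent `β* = 2^{2m} π^m m!`. -/
def betaStar (m : ℕ) : ℝ := 2^(2*m) * Real.pi^m * (Nat.factorial m : ℝ)

/-- `ω_{2m-1} = 2π^m/(m-1)!`, the volume of the unit sphere `S^{2m-1}`. -/
def omega2m1 (m : ℕ) : ℝ := 2 * Real.pi^m / (Nat.factorial (m-1) : ℝ)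

/-- `K̃_{m,l} = (−1)^{l+1} 2^{2l−1} (l−1)! (m−1)! / (m−l−1)!`. -/
def Ktilde (m l : ℕ) : ℝ :=
  (-1)^(l+1) * 2^(2*l-1) * (Nat.factorial (l-1) : ℝ) * (Nat.factorial (m-1) : ℝ) /
    (Nat.factorial (m-l-1) : ℝ)

/-- `K_{m,j/2}`: `K̃_{m,j/2}` for even `j`, `−(j−1)K̃_{m,(j−1)/2}` for odd `j ≥ 3`, `1` for `j = 1`. -/
def Km (m j : ℕ) : ℝ :=
  if j = 1 then 1
  else if j % 2 = 0 then Ktilde m (j/2)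
  else -((j : ℝ) - 1) * Ktilde m ((j-1)/2)

lemma fact_ne (n : ℕ) : ((Nat.factorial n : ℕ) : ℝ) ≠ 0 :=
  Nat.cast_ne_zero.mpr (Nat.factorial_pos n).ne'

/-- Termwise computation of the summand. -/
lemma term_eq (m j : ℕ) (hm : 2 ≤ m) (hj1 : 1 ≤ j) (hj2 : j ≤ m - 1) :
    (-1 : ℝ)^(j+m) * Km m j * Km m (2*m - j - 1)
      = 2^(2*m-3) * ((Nat.factorial (m-1) : ℕ) : ℝ)^2 *
        (if j % 2 = 0 then (1:ℝ)/((j/2 : ℕ) : ℝ) else -1/(((2*m-1-j)/2 : ℕ) : ℝ)) := by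
  rcases Nat.even_or_odd j with he | ho
  · -- j even: j = 2a+2, m = 2a+3+c
    obtain ⟨a, c, hj, hmv⟩ : ∃ a c, j = 2*a+2 ∧ m = 2*a+3+c := by
      refine ⟨j/2 - 1, m - (j+1), ?_, ?_⟩ <;> · rcases he with ⟨t, ht⟩; omega
    subst hj hmv
    rw [show 2*(2*a+3+c) - (2*a+2) - 1 = 2*a+2*c+3 by omega]
    rw [Km, if_neg (by omega : ¬ (2*a+2 = 1)), if_pos (by omega : (2*a+2) % 2 = 0),
      show (2*a+2)/2 = a+1 by omega]
    rw [Km, if_neg (by omega : ¬ (2*a+2*c+3 = 1)), if_neg (by omega : ¬ ((2*a+2*c+3) % 2 = 0)),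
      show (2*a+2*c+3-1)/2 = a+c+1 by omega]
    rw [if_pos (by omega : (2*a+2) % 2 = 0)]
    rw [show 2*(2*a+3+c)-3 = 4*a+2*c+3 by omega, show 2*a+3+c-1 = 2*a+c+2 by omega]
    rw [Ktilde, Ktilde,
      show 2*(a+1)-1 = 2*a+1 by omega, show a+1-1 = a by omega,
      show 2*a+3+c-(a+1)-1 = a+c+1 by omega,
      show 2*(a+c+1)-1 = 2*a+2*c+1 by omega, show a+c+1-1 = a+c by omega,
      show 2*a+3+c-(a+c+1)-1 = a+1 by omega,
      show 2*a+3+c-1 = 2*a+c+2 by omega]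
    rw [Nat.factorial_succ (a+c), Nat.factorial_succ a]
    push_cast
    have h1 : ((Nat.factorial a : ℕ) : ℝ) ≠ 0 := fact_ne a
    have h2 : ((Nat.factorial (a+c) : ℕ) : ℝ) ≠ 0 := fact_ne (a+c)
    have h3 : (a : ℝ) + 1 ≠ 0 := by positivity
    have h4 : (a : ℝ) + (c : ℝ) + 1 ≠ 0 := by positivity
    have s6 : ∀ n:ℕ, (-1:ℝ)^(n*6) = 1 := fun n => Even.neg_one_pow ⟨n*3, by ring⟩
    have s2 : ∀ n:ℕ, (-1:ℝ)^(n*2) = 1 := fun n => Even.neg_one_pow ⟨n, by ring⟩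
    field_simp
    ring_nf
    simp only [s6, s2, one_mul, mul_one]
    all_goals ring
  · rcases Nat.eq_or_lt_of_le hj1 with h1 | h1'
    · -- j = 1, m = c+2
      obtain ⟨c, hmv⟩ : ∃ c, m = c+2 := ⟨m-2, by omega⟩
      subst hmv
      rw [← h1]
      rw [show 2*(c+2) - 1 - 1 = 2*c+2 by omega]
      rw [Km, if_pos rfl]
      rw [Km, if_neg (by omega : ¬ (2*c+2 = 1)), if_pos (by omega : (2*c+2) % 2 = 0),
        show (2*c+2)/2 = c+1 by omega]
      rw [show 2*(c+2)-3 = 2*c+1 by omega, show c+2-1 = c+1 by omega]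
      rw [Ktilde, show 2*(c+1)-1 = 2*c+1 by omega, show c+1-1 = c by omega,
        show c+2-(c+1)-1 = 0 by omega, show c+2-1 = c+1 by omega, Nat.factorial_zero]
      rw [Nat.factorial_succ c]
      push_cast
      have h1 : ((Nat.factorial c : ℕ) : ℝ) ≠ 0 := fact_ne c
      have h3 : (c : ℝ) + 1 ≠ 0 := by positivity
      have s6 : ∀ n:ℕ, (-1:ℝ)^(n*6) = 1 := fun n => Even.neg_one_pow ⟨n*3, by ring⟩
      have s2 : ∀ n:ℕ, (-1:ℝ)^(n*2) = 1 := fun n => Even.neg_one_pow ⟨n, by ring⟩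
      field_simp
      ring_nf
      simp only [s6, s2, one_mul, mul_one]
      all_goals ring
    · -- j odd, j ≥ 3 : j = 2a+3, m = 2a+4+c
      obtain ⟨a, c, hj, hmv⟩ : ∃ a c, j = 2*a+3 ∧ m = 2*a+4+c := by
        refine ⟨(j-3)/2, m - (j+1), ?_, ?_⟩ <;> · rcases ho with ⟨t, ht⟩; omega
      subst hj hmv
      rw [show 2*(2*a+4+c) - (2*a+3) - 1 = 2*a+2*c+4 by omega]
      rw [show 2*(2*a+4+c) - 1 - (2*a+3) = 2*a+2*c+4 by omega]
      rw [Km, if_neg (by omega : ¬ (2*a+3 = 1)), if_neg (by omega : ¬ ((2*a+3) % 2 = 0)),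
        show (2*a+3-1)/2 = a+1 by omega]
      rw [Km, if_neg (by omega : ¬ (2*a+2*c+4 = 1)), if_pos (by omega : (2*a+2*c+4) % 2 = 0),
        show (2*a+2*c+4)/2 = a+c+2 by omega]
      rw [if_neg (by omega : ¬ ((2*a+3) % 2 = 0))]
      rw [show 2*(2*a+4+c)-3 = 4*a+2*c+5 by omega, show 2*a+4+c-1 = 2*a+c+3 by omega]
      rw [Ktilde, Ktilde,
        show 2*(a+1)-1 = 2*a+1 by omega, show a+1-1 = a by omega,
        show 2*a+4+c-(a+1)-1 = a+c+2 by omega,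
        show 2*(a+c+2)-1 = 2*a+2*c+3 by omega, show a+c+2-1 = a+c+1 by omega,
        show 2*a+4+c-(a+c+2)-1 = a+1 by omega,
        show 2*a+4+c-1 = 2*a+c+3 by omega]
      rw [show a+c+2 = (a+c+1)+1 by omega, Nat.factorial_succ (a+c+1),
        Nat.factorial_succ (a+c), Nat.factorial_succ a]
      push_cast
      have h1 : ((Nat.factorial a : ℕ) : ℝ) ≠ 0 := fact_ne a
      have h2 : ((Nat.factorial (a+c) : ℕ) : ℝ) ≠ 0 := fact_ne (a+c)
      have h3 : (a : ℝ) + 1 ≠ 0 := by positivity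
      have h4 : (a : ℝ) + (c : ℝ) + 1 + 1 ≠ 0 := by positivity
      have h5 : (a : ℝ) + (c : ℝ) + 1 ≠ 0 := by positivity
      have s6 : ∀ n:ℕ, (-1:ℝ)^(n*6) = 1 := fun n => Even.neg_one_pow ⟨n*3, by ring⟩
      have s2 : ∀ n:ℕ, (-1:ℝ)^(n*2) = 1 := fun n => Even.neg_one_pow ⟨n, by ring⟩
      field_simp
      ring_nf
      simp only [s6, s2, one_mul, mul_one]
      all_goals ring

/-- Reindexing the half-integer sum. -/
lemma sum_reindex (m : ℕ) (hm : 2 ≤ m) :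
    ∑ j ∈ Finset.Icc 1 (m-1),
        (if j % 2 = 0 then (1:ℝ)/((j/2 : ℕ) : ℝ) else -1/(((2*m-1-j)/2 : ℕ) : ℝ))
      = ∑ k ∈ Finset.Icc 1 (m-1), (-1 : ℝ)^(2*k/m) / (k : ℝ) := by
  apply Finset.sum_nbij' (i := fun j => if j % 2 = 0 then j/2 else (2*m-1-j)/2)
    (j := fun k => if 2*k ≤ m-1 then 2*k else 2*m-1-2*k)
  · intro j hj
    simp only [Finset.mem_Icc] at hj ⊢
    split <;> omega
  · intro k hk
    simp only [Finset.mem_Icc] at hk ⊢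
    split <;> omega
  · intro j hj
    simp only [Finset.mem_Icc] at hj
    split <;> split <;> omega
  · intro k hk
    simp only [Finset.mem_Icc] at hk
    split <;> split <;> omega
  · intro j hj
    simp only [Finset.mem_Icc] at hj
    by_cases h : j % 2 = 0
    · rw [if_pos h, if_pos h]
      have hd : 2*(j/2)/m = 0 := Nat.div_eq_of_lt (by omega)
      rw [hd, pow_zero]
    · rw [if_neg h, if_neg h]
      have hd : 2*((2*m-1-j)/2)/m = 1 := Nat.div_eq_of_lt_le (by omega) (by omega)
      rw [hd, pow_one]

/-- The constant identity. -/
lemma const_eq (m : ℕ) (hm : 2 ≤ m) :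
    (2*(m:ℝ) / betaStar m)^2 * omega2m1 m *
      (2^(2*m-3) * ((Nat.factorial (m-1) : ℕ) : ℝ)^2) = (m:ℝ) / betaStar m := by
  obtain ⟨c, rfl⟩ : ∃ c, m = c+2 := ⟨m-2, by omega⟩
  unfold betaStar omega2m1
  rw [show 2*(c+2)-3 = 2*c+1 by omega, show c+2-1 = c+1 by omega,
    show 2*(c+2) = 2*c+4 by omega, show c+2 = (c+1)+1 from rfl,
    Nat.factorial_succ (c+1), Nat.factorial_succ c]
  push_cast
  have hπ : Real.pi ≠ 0 := Real.pi_ne_zero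
  have h1 : ((Nat.factorial c : ℕ) : ℝ) ≠ 0 := fact_ne c
  have h2 : (c : ℝ) + 1 ≠ 0 := by positivity
  have h3 : (c : ℝ) + 1 + 1 ≠ 0 := by positivity
  field_simp
  ring

/-- `H_m = (2m/β*)² ω_{2m−1} Σ_{j=1}^{m−1} (−1)^{j+m} K_{m,j/2} K_{m,(2m−j−1)/2}`
equals `(m/β*) Σ_{j=1}^{m−1} (−1)^{⌊2j/m⌋}/j`. -/
theorem statement10 (m : ℕ) (hm : 2 ≤ m) :
    (2*(m:ℝ) / betaStar m)^2 * omega2m1 m *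
      ∑ j ∈ Finset.Icc 1 (m-1), (-1 : ℝ)^(j+m) * Km m j * Km m (2*m - j - 1)
    = ((m:ℝ) / betaStar m) * ∑ j ∈ Finset.Icc 1 (m-1), (-1 : ℝ)^(2*j/m) / (j : ℝ) := by
  have hsum : ∑ j ∈ Finset.Icc 1 (m-1), (-1 : ℝ)^(j+m) * Km m j * Km m (2*m - j - 1)
      = 2^(2*m-3) * ((Nat.factorial (m-1) : ℕ) : ℝ)^2 *
        ∑ j ∈ Finset.Icc 1 (m-1),
          (if j % 2 = 0 then (1:ℝ)/((j/2 : ℕ) : ℝ) else -1/(((2*m-1-j)/2 : ℕ) : ℝ)) := by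
    rw [Finset.mul_sum]
    refine Finset.sum_congr rfl fun j hj => ?_
    simp only [Finset.mem_Icc] at hj
    exact term_eq m j hm hj.1 hj.2
  rw [hsum, sum_reindex m hm, ← mul_assoc, const_eq m hm]
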